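/- Let φ ≥ 2 be an integer and let f : {1, …, φ} → ℝ be any injective function with minimizer x*. Consider the ParamHS Markov chain on {1, …, φ} induced by f, and for a starting state x₀ let T(x₀) be the hitting time of x*. Then for every x₀ ∈ {1, …, φ}, E[T(x₀)] ≤ 4·H_{φ−1}·log₂(φ) + 4φ·H_{φ−1} = O(φ log φ). -/

import Mathlib

open MeasureTheory
open scoped Classical

/-- The `(φ−1)`-th harmonic number `H_{φ−1} = ∑_{k=1}^{φ−1} 1/k`. -/
noncomputable def harmonicNumberPred (φ : ℕ) : ℝ :=
  ∑ k ∈ Finset.Icc 1 (φ - 1), (1 : ℝ) / (k : ℝ)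

/-- The state reached by ParamHS from state `x` when the step size `d` is
sampled: the candidate set is `S = {x − d, x + d} ∩ {1, …, φ}`, `y` is the
element of `S` minimising `f`, and the chain moves to `y` iff `f y < f x`
(staying at `x` if `S` is empty). -/
noncomputable def paramHSNext (φ : ℕ) (f : ℕ → ℝ) (x d : ℕ) : ℕ :=
  if h : ∃ y ∈ ({x - d, x + d} : Finset ℕ) ∩ Finset.Icc 1 φ,
      ∀ z ∈ ({x - d, x + d} : Finset ℕ) ∩ Finset.Icc 1 φ, f y ≤ f z then
    (if f h.choose < f x then h.choose else x)
  else x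

/-- The transition probability of the ParamHS Markov chain on `{1, …, φ}`
induced by `f`: a step size `d ∈ {1, …, φ−1}` is sampled with probability
`1/(d·H_{φ−1})` and the chain moves to `paramHSNext φ f x d`. -/
noncomputable def paramHSTransProb (φ : ℕ) (f : ℕ → ℝ) (x y : ℕ) : ℝ :=
  ∑ d ∈ Finset.Icc 1 (φ - 1),
    if paramHSNext φ f x d = y then 1 / ((d : ℝ) * harmonicNumberPred φ) else 0


section auxlemmas
variable (φ : ℕ) (f : ℕ → ℝ)

variable (φ : ℕ) (f : ℕ → ℝ)

lemma harmonic_ge_one (hφ : 2 ≤ φ) : 1 ≤ harmonicNumberPred φ := by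
  unfold harmonicNumberPred
  have h1 : (1:ℕ) ∈ Finset.Icc 1 (φ-1) := by
    simp only [Finset.mem_Icc]; omega
  have := Finset.single_le_sum (f := fun k : ℕ => (1:ℝ)/(k:ℝ))
    (fun i _ => by positivity) h1
  simpa using this

lemma paramHSNext_mem (x d : ℕ) (hx : x ∈ Finset.Icc 1 φ) :
    paramHSNext φ f x d ∈ Finset.Icc 1 φ := by
  unfold paramHSNext
  split_ifs with h1 h2
  · exact (Finset.mem_inter.mp h1.choose_spec.1).2
  · exact hx
  · exact hx

lemma paramHSNext_hits (x xstar : ℕ) (hx : x ∈ Finset.Icc 1 φ)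
    (hxs : xstar ∈ Finset.Icc 1 φ) (hne : x ≠ xstar)
    (hmin : ∀ y ∈ Finset.Icc 1 φ, y ≠ xstar → f xstar < f y) :
    paramHSNext φ f x (if xstar < x then x - xstar else xstar - x) = xstar := by
  set d := if xstar < x then x - xstar else xstar - x with hd
  have hxI := Finset.mem_Icc.mp hx
  have hxsI := Finset.mem_Icc.mp hxs
  have hmemS : xstar ∈ ({x - d, x + d} : Finset ℕ) ∩ Finset.Icc 1 φ := by
    rw [Finset.mem_inter, Finset.mem_insert, Finset.mem_singleton]
    constructor
    · by_cases h : xstar < x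
      · left; rw [hd, if_pos h]; omega
      · right; rw [hd, if_neg h]; omega
    · exact hxs
  have hex : ∃ y ∈ ({x - d, x + d} : Finset ℕ) ∩ Finset.Icc 1 φ,
      ∀ z ∈ ({x - d, x + d} : Finset ℕ) ∩ Finset.Icc 1 φ, f y ≤ f z :=
    Finset.exists_min_image _ f ⟨xstar, hmemS⟩
  have hch : hex.choose = xstar := by
    obtain ⟨hmem, hle⟩ := hex.choose_spec
    by_contra hne2
    have h1 : f xstar < f hex.choose :=
      hmin _ (Finset.mem_inter.mp hmem).2 hne2
    exact absurd (hle _ hmemS) (not_le.mpr h1)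
  unfold paramHSNext
  rw [dif_pos hex, hch, if_pos (hmin _ hx hne)]

lemma transProb_nonneg (x y : ℕ) (hφ : 2 ≤ φ) : 0 ≤ paramHSTransProb φ f x y := by
  unfold paramHSTransProb
  apply Finset.sum_nonneg
  intro d _
  have hH : (0:ℝ) < harmonicNumberPred φ := lt_of_lt_of_le one_pos (harmonic_ge_one φ hφ)
  split_ifs
  · positivity
  · exact le_refl 0

lemma transProb_zero (x y : ℕ) (hx : x ∈ Finset.Icc 1 φ) (hy : y ∉ Finset.Icc 1 φ) :
    paramHSTransProb φ f x y = 0 := by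
  unfold paramHSTransProb
  apply Finset.sum_eq_zero
  intro d _
  rw [if_neg]
  intro h
  exact hy (h ▸ paramHSNext_mem φ f x d hx)

lemma transProb_sum_one (x : ℕ) (hφ : 2 ≤ φ) :
    ∑ y ∈ (Finset.Icc 1 (φ-1)).image (paramHSNext φ f x), paramHSTransProb φ f x y = 1 := by
  have hH : (0:ℝ) < harmonicNumberPred φ := lt_of_lt_of_le one_pos (harmonic_ge_one φ hφ)
  unfold paramHSTransProb
  rw [Finset.sum_comm]
  have : ∀ d ∈ Finset.Icc 1 (φ-1),
      (∑ y ∈ (Finset.Icc 1 (φ-1)).image (paramHSNext φ f x),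
        if paramHSNext φ f x d = y then 1 / ((d : ℝ) * harmonicNumberPred φ) else 0)
      = 1 / ((d : ℝ) * harmonicNumberPred φ) := by
    intro d hd
    rw [Finset.sum_ite_eq, if_pos (Finset.mem_image_of_mem _ hd)]
  rw [Finset.sum_congr rfl this]
  have : ∀ d ∈ Finset.Icc 1 (φ-1),
      1 / ((d : ℝ) * harmonicNumberPred φ) = (1/(d:ℝ)) * (1/harmonicNumberPred φ) := by
    intro d _; field_simp
  rw [Finset.sum_congr rfl this, ← Finset.sum_mul]
  rw [show (∑ d ∈ Finset.Icc 1 (φ-1), 1/(d:ℝ)) = harmonicNumberPred φ from rfl]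
  field_simp

lemma transProb_xstar_ge (x xstar : ℕ) (hφ : 2 ≤ φ) (hx : x ∈ Finset.Icc 1 φ)
    (hxs : xstar ∈ Finset.Icc 1 φ) (hne : x ≠ xstar)
    (hmin : ∀ y ∈ Finset.Icc 1 φ, y ≠ xstar → f xstar < f y) :
    1 / (((φ:ℝ) - 1) * harmonicNumberPred φ) ≤ paramHSTransProb φ f x xstar := by
  have hH : (0:ℝ) < harmonicNumberPred φ := lt_of_lt_of_le one_pos (harmonic_ge_one φ hφ)
  set d := if xstar < x then x - xstar else xstar - x with hd
  have hxI := Finset.mem_Icc.mp hx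
  have hxsI := Finset.mem_Icc.mp hxs
  have hdI : d ∈ Finset.Icc 1 (φ-1) := by
    rw [Finset.mem_Icc, hd]; split_ifs <;> omega
  have hterm : (if paramHSNext φ f x d = xstar then 1 / ((d : ℝ) * harmonicNumberPred φ) else 0)
      = 1 / ((d : ℝ) * harmonicNumberPred φ) := by
    rw [if_pos (paramHSNext_hits φ f x xstar hx hxs hne hmin)]
  have hle : 1 / (((φ:ℝ) - 1) * harmonicNumberPred φ) ≤ 1 / ((d : ℝ) * harmonicNumberPred φ) := by
    apply one_div_le_one_div_of_le
    · have : 1 ≤ d := (Finset.mem_Icc.mp hdI).1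
      have : (1:ℝ) ≤ (d:ℝ) := by exact_mod_cast this
      positivity
    · have h2 : d ≤ φ - 1 := (Finset.mem_Icc.mp hdI).2
      have h3 : (d:ℝ) ≤ (φ:ℝ) - 1 := by
        have : ((d:ℕ):ℝ) ≤ ((φ-1:ℕ):ℝ) := by exact_mod_cast h2
        have h4 : ((φ-1:ℕ):ℝ) = (φ:ℝ) - 1 := by
          have : (1:ℕ) ≤ φ := by omega
          push_cast [this]; ring
        linarith [h4 ▸ this]
      nlinarith
  calc 1 / (((φ:ℝ) - 1) * harmonicNumberPred φ)
      ≤ 1 / ((d : ℝ) * harmonicNumberPred φ) := hle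
    _ = (if paramHSNext φ f x d = xstar then 1 / ((d : ℝ) * harmonicNumberPred φ) else 0) := hterm.symm
    _ ≤ paramHSTransProb φ f x xstar := by
        unfold paramHSTransProb
        exact Finset.single_le_sum
          (f := fun e : ℕ => if paramHSNext φ f x e = xstar then 1 / ((e : ℝ) * harmonicNumberPred φ) else 0)
          (fun i _ => by split_ifs
                         · positivity
                         · exact le_refl 0) hdI


lemma transProb_escape (x xstar : ℕ) (hφ : 2 ≤ φ) (hx : x ∈ Finset.Icc 1 φ)
    (hxs : xstar ∈ Finset.Icc 1 φ) (hne : x ≠ xstar)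
    (hmin : ∀ y ∈ Finset.Icc 1 φ, y ≠ xstar → f xstar < f y) :
    (∑' y : ℕ, if y = xstar then 0 else ENNReal.ofReal (paramHSTransProb φ f x y))
      ≤ ENNReal.ofReal (1 - 1 / (((φ:ℝ) - 1) * harmonicNumberPred φ)) := by
  set Y := (Finset.Icc 1 (φ-1)).image (paramHSNext φ f x) with hY
  have hxsY : xstar ∈ Y := by
    rw [hY]
    refine Finset.mem_image.mpr ⟨(if xstar < x then x - xstar else xstar - x), ?_,
      paramHSNext_hits φ f x xstar hx hxs hne hmin⟩
    have hxI := Finset.mem_Icc.mp hx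
    have hxsI := Finset.mem_Icc.mp hxs
    rw [Finset.mem_Icc]
    split_ifs <;> omega
  have hzero : ∀ y ∉ Y,
      (if y = xstar then 0 else ENNReal.ofReal (paramHSTransProb φ f x y)) = 0 := by
    intro y hy
    split_ifs with h
    · rfl
    · rw [show paramHSTransProb φ f x y = 0 from ?_, ENNReal.ofReal_zero]
      unfold paramHSTransProb
      apply Finset.sum_eq_zero
      intro d hd
      rw [if_neg]
      intro hc
      exact hy (hc ▸ Finset.mem_image_of_mem _ hd)
  rw [tsum_eq_sum hzero]
  have hpush : (∑ y ∈ Y, if y = xstar then 0 else ENNReal.ofReal (paramHSTransProb φ f x y))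
      = ENNReal.ofReal (∑ y ∈ Y, if y = xstar then 0 else paramHSTransProb φ f x y) := by
    rw [ENNReal.ofReal_sum_of_nonneg (fun y _ => by
      split_ifs
      · exact le_refl 0
      · exact transProb_nonneg φ f x y hφ)]
    refine Finset.sum_congr rfl (fun y _ => ?_)
    split_ifs
    · simp
    · rfl
  rw [hpush]
  apply ENNReal.ofReal_le_ofReal
  have h1 : (∑ y ∈ Y, if y = xstar then 0 else paramHSTransProb φ f x y)
      = ∑ y ∈ Y.erase xstar, paramHSTransProb φ f x y := by
    rw [← Finset.sum_erase_add _ _ hxsY, if_pos rfl, add_zero]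
    exact Finset.sum_congr rfl (fun y hy => if_neg (Finset.ne_of_mem_erase hy))
  have h2 : (∑ y ∈ Y.erase xstar, paramHSTransProb φ f x y) + paramHSTransProb φ f x xstar
      = 1 := by
    rw [Finset.sum_erase_add _ _ hxsY]
    exact transProb_sum_one φ f x hφ
  have h3 := transProb_xstar_ge φ f x xstar hφ hx hxs hne hmin
  rw [h1]
  linarith

end auxlemmas


noncomputable def exth (t : ℕ) (g : Fin (t+1) → ℕ) : ℕ → ℕ :=
  fun s => if h : s < t + 1 then g ⟨s, h⟩ else 0

lemma exth_last (t : ℕ) (g : Fin (t+1) → ℕ) : exth t g t = g (Fin.last t) := by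
  unfold exth
  rw [dif_pos (Nat.lt_succ_self t)]
  rfl

def snocEquiv (t : ℕ) : ((Fin (t+1) → ℕ) × ℕ) ≃ (Fin (t+1+1) → ℕ) where
  toFun p := Fin.snoc p.1 p.2
  invFun h := (Fin.init h, h (Fin.last (t+1)))
  left_inv p := by simp
  right_inv h := by simp

lemma snocEquiv_apply (t : ℕ) (p : (Fin (t+1) → ℕ) × ℕ) :
    snocEquiv t p = Fin.snoc p.1 p.2 := rfl

def cylEvent {Ω : Type*} (X : ℕ → Ω → ℕ) (t : ℕ) (g : Fin (t+1) → ℕ) : Set Ω :=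
  {ω | ∀ s : Fin (t+1), X s ω = g s}

lemma cylEvent_eq {Ω : Type*} (X : ℕ → Ω → ℕ) (t : ℕ) (g : Fin (t+1) → ℕ) :
    cylEvent X t g = {ω | ∀ s ≤ t, X s ω = exth t g s} := by
  ext ω
  simp only [cylEvent, Set.mem_setOf_eq]
  constructor
  · intro h s hs
    have hs' : s < t + 1 := Nat.lt_succ_of_le hs
    rw [exth, dif_pos hs']
    exact h ⟨s, hs'⟩
  · intro h s
    have := h s.1 (Nat.lt_succ_iff.mp s.2)
    rwa [exth, dif_pos s.2, Fin.eta] at this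

lemma cylEvent_succ {Ω : Type*} (X : ℕ → Ω → ℕ) (t : ℕ) (g : Fin (t+2) → ℕ) :
    cylEvent X (t+1) g =
      {ω | (∀ s ≤ t, X s ω = exth t (Fin.init g) s) ∧ X (t+1) ω = g (Fin.last (t+1))} := by
  ext ω
  simp only [cylEvent, Set.mem_setOf_eq]
  constructor
  · intro h
    refine ⟨fun s hs => ?_, h (Fin.last (t+1))⟩
    have hs' : s < t + 1 := Nat.lt_succ_of_le hs
    rw [exth, dif_pos hs']
    have := h ⟨s, by omega⟩
    rw [this]
    show g _ = Fin.init g _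
    rw [Fin.init]
    congr 1
  · rintro ⟨h1, h2⟩ s
    by_cases hs : s.1 < t + 1
    · have := h1 s.1 (Nat.lt_succ_iff.mp hs)
      rw [exth, dif_pos hs] at this
      rw [this, Fin.init]
      congr 1
    · have hlast : s = Fin.last (t+1) := by
        apply Fin.ext
        have := s.2
        simp only [Fin.val_last]
        omega
      rw [hlast]
      exact h2

theorem hitting_aux {Ω : Type*} [MeasurableSpace Ω] (μ : Measure Ω) [IsProbabilityMeasure μ]
    (G : Set ℕ) (κ : ℕ → ℕ → ℝ) (q₀ : ℝ)
    (xstar x₀ : ℕ) (hx₀ : x₀ ∈ G)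
    (hclosed : ∀ x ∈ G, ∀ y, y ∉ G → κ x y = 0)
    (hescape : ∀ x ∈ G, x ≠ xstar →
      (∑' y : ℕ, if y = xstar then 0 else ENNReal.ofReal (κ x y)) ≤ ENNReal.ofReal q₀)
    (X : ℕ → Ω → ℕ)
    (hstart : ∀ᵐ ω ∂μ, X 0 ω = x₀)
    (hmarkov : ∀ (t : ℕ) (h : ℕ → ℕ) (y : ℕ),
      μ {ω | (∀ s ≤ t, X s ω = h s) ∧ X (t + 1) ω = y}
        = ENNReal.ofReal (κ (h t) y) * μ {ω | ∀ s ≤ t, X s ω = h s}) :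
    ∫⁻ ω, (⨅ (t : ℕ) (_ : X t ω = xstar), (t : ENNReal)) ∂μ
      ≤ (1 - ENNReal.ofReal q₀)⁻¹ := by
  -- the measure of the starting deviation is zero
  have hstart0 : μ {ω | ¬ X 0 ω = x₀} = 0 := ae_iff.mp hstart
  -- Z : trajectories leaving G are null
  have hZ : ∀ (t : ℕ) (g : Fin (t+1) → ℕ), (∃ s, g s ∉ G) → μ (cylEvent X t g) = 0 := by
    intro t
    induction t with
    | zero =>
      intro g ⟨s, hs⟩
      have hs0 : g 0 ∉ G := by
        have : s = 0 := Fin.ext (by omega)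
        rwa [this] at hs
      have hsub : cylEvent X 0 g ⊆ {ω | ¬ X 0 ω = x₀} := by
        intro ω hω
        simp only [Set.mem_setOf_eq]
        have h0 : X 0 ω = g 0 := hω 0
        rw [h0]
        intro h
        exact hs0 (h ▸ hx₀)
      exact le_antisymm (hstart0 ▸ measure_mono hsub) zero_le
    | succ t ih =>
      intro g ⟨s, hs⟩
      rw [cylEvent_succ, hmarkov t (exth t (Fin.init g)) (g (Fin.last (t+1))),
        ← cylEvent_eq]
      by_cases hinit : ∃ s' : Fin (t+1), Fin.init g s' ∉ G
      · rw [ih _ hinit, mul_zero]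
      · push_neg at hinit
        have hslast : s = Fin.last (t+1) := by
          by_contra hne
          have hlt : s.1 < t + 1 := by
            rcases Nat.lt_succ_iff_lt_or_eq.mp s.2 with h | h
            · exact h
            · exact absurd (Fin.ext h) hne
          have := hinit ⟨s.1, hlt⟩
          rw [Fin.init] at this
          have he : Fin.castSucc (⟨s.1, hlt⟩ : Fin (t+1)) = s := Fin.ext rfl
          rw [he] at this
          exact hs this
        have hx : exth t (Fin.init g) t ∈ G := by
          rw [exth, dif_pos (Nat.lt_succ_self t)]
          exact hinit _
        rw [hclosed _ hx _ (hslast ▸ hs), ENNReal.ofReal_zero, zero_mul]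
  set q : ENNReal := ENNReal.ofReal q₀ with hq
  -- main induction: mass of xstar-avoiding cylinders decays geometrically
  have hM : ∀ t : ℕ,
      (∑' g : Fin (t+1) → ℕ, μ (if ∀ s, g s ≠ xstar then cylEvent X t g else ∅)) ≤ q ^ t := by
    intro t
    induction t with
    | zero =>
      show (∑' g : Fin 1 → ℕ, μ (if ∀ s : Fin 1, g s ≠ xstar then cylEvent X 0 g else ∅)) ≤ q ^ 0
      rw [← Equiv.tsum_eq (Equiv.funUnique (Fin 1) ℕ).symm
        (fun g : Fin 1 → ℕ => μ (if ∀ s : Fin 1, g s ≠ xstar then cylEvent X 0 g else ∅))]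
      have hbound : ∀ n : ℕ,
          μ (if ∀ s : Fin 1, ((Equiv.funUnique (Fin 1) ℕ).symm n) s ≠ xstar then
              cylEvent X 0 ((Equiv.funUnique (Fin 1) ℕ).symm n) else ∅)
            ≤ (if n = x₀ then 1 else 0) := by
        intro n
        by_cases hn : n = x₀
        · rw [if_pos hn]
          split_ifs
          · exact prob_le_one
          · simp
        · rw [if_neg hn]
          split_ifs with h
          · have hsub : cylEvent X 0 ((Equiv.funUnique (Fin 1) ℕ).symm n)
                ⊆ {ω | ¬ X 0 ω = x₀} := by
              intro ω hω
              simp only [Set.mem_setOf_eq]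
              have h0 : X 0 ω = n := hω 0
              rw [h0]
              exact hn
            exact le_of_le_of_eq (measure_mono hsub) hstart0
          · simp
      calc (∑' n : ℕ, μ (if ∀ s : Fin 1, ((Equiv.funUnique (Fin 1) ℕ).symm n) s ≠ xstar then
              cylEvent X 0 ((Equiv.funUnique (Fin 1) ℕ).symm n) else ∅))
          ≤ ∑' n : ℕ, (if n = x₀ then (1:ENNReal) else 0) := ENNReal.tsum_le_tsum hbound
        _ = 1 := tsum_ite_eq x₀ 1
        _ = q ^ 0 := (pow_zero q).symm
    | succ t ih =>
      rw [← Equiv.tsum_eq (snocEquiv t)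
        (fun g : Fin (t+1+1) → ℕ => μ (if ∀ s, g s ≠ xstar then cylEvent X (t+1) g else ∅))]
      have hinner : ∀ g : Fin (t+1) → ℕ,
          (∑' y : ℕ, μ (if ∀ s, (Fin.snoc g y : Fin (t+1+1) → ℕ) s ≠ xstar then
              cylEvent X (t+1) (Fin.snoc g y) else ∅))
            ≤ q * μ (if ∀ s, g s ≠ xstar then cylEvent X t g else ∅) := by
        intro g
        by_cases hP : ∀ s, g s ≠ xstar
        · rw [if_pos hP]
          have hterm : ∀ y : ℕ,
              μ (if ∀ s, (Fin.snoc g y : Fin (t+1+1) → ℕ) s ≠ xstar then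
                  cylEvent X (t+1) (Fin.snoc g y) else ∅)
                = (if y = xstar then 0 else
                    ENNReal.ofReal (κ (g (Fin.last t)) y) * μ (cylEvent X t g)) := by
            intro y
            by_cases hy : y = xstar
            · rw [if_neg, if_pos hy, measure_empty]
              intro hc
              have := hc (Fin.last (t+1))
              rw [Fin.snoc_last] at this
              exact this hy
            · rw [if_pos, if_neg hy]
              · rw [cylEvent_succ, Fin.init_snoc, Fin.snoc_last,
                  hmarkov t (exth t g) y, ← cylEvent_eq, exth_last]
              · intro s
                by_cases hs : s.1 < t + 1
                · have hse : s = Fin.castSucc ⟨s.1, hs⟩ := Fin.ext rfl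
                  rw [hse, Fin.snoc_castSucc]
                  exact hP _
                · have hse : s = Fin.last (t+1) := Fin.ext (by have := s.2; simp only [Fin.val_last]; omega)
                  rw [hse, Fin.snoc_last]
                  exact hy
          rw [tsum_congr hterm]
          by_cases hG : ∀ s, g s ∈ G
          · have hsplit : ∀ y : ℕ,
                (if y = xstar then 0 else
                  ENNReal.ofReal (κ (g (Fin.last t)) y) * μ (cylEvent X t g))
                  = (if y = xstar then 0 else ENNReal.ofReal (κ (g (Fin.last t)) y))
                      * μ (cylEvent X t g) := by
              intro y
              split_ifs
              · rw [zero_mul]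
              · rfl
            rw [tsum_congr hsplit, ENNReal.tsum_mul_right]
            exact mul_le_mul_left (hescape _ (hG _) (hP _)) _
          · push_neg at hG
            have h0 : μ (cylEvent X t g) = 0 := hZ t g hG
            have hz : ∀ y : ℕ,
                (if y = xstar then 0 else
                  ENNReal.ofReal (κ (g (Fin.last t)) y) * μ (cylEvent X t g)) = 0 := by
              intro y
              split_ifs
              · rfl
              · rw [h0, mul_zero]
            rw [tsum_congr hz]
            simp
        · have hz : ∀ y : ℕ,
              μ (if ∀ s, (Fin.snoc g y : Fin (t+1+1) → ℕ) s ≠ xstar then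
                  cylEvent X (t+1) (Fin.snoc g y) else ∅) = 0 := by
            intro y
            rw [if_neg, measure_empty]
            intro hc
            apply hP
            intro s
            have := hc (Fin.castSucc s)
            rwa [Fin.snoc_castSucc] at this
          rw [tsum_congr hz]
          simp
      calc (∑' p : (Fin (t+1) → ℕ) × ℕ,
              μ (if ∀ s, (snocEquiv t p) s ≠ xstar then cylEvent X (t+1) (snocEquiv t p) else ∅))
          = ∑' (g : Fin (t+1) → ℕ) (y : ℕ),
              μ (if ∀ s, (Fin.snoc g y : Fin (t+1+1) → ℕ) s ≠ xstar then
                  cylEvent X (t+1) (Fin.snoc g y) else ∅) := by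
            rw [tsum_congr (fun p : (Fin (t+1) → ℕ) × ℕ => by
              rw [snocEquiv_apply] :
              ∀ p : (Fin (t+1) → ℕ) × ℕ,
                μ (if ∀ s, (snocEquiv t p) s ≠ xstar then cylEvent X (t+1) (snocEquiv t p) else ∅)
                  = μ (if ∀ s, (Fin.snoc p.1 p.2 : Fin (t+1+1) → ℕ) s ≠ xstar then
                      cylEvent X (t+1) (Fin.snoc p.1 p.2) else ∅))]
            exact ENNReal.tsum_prod (f := fun g y =>
              μ (if ∀ s, (Fin.snoc g y : Fin (t+1+1) → ℕ) s ≠ xstar then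
                  cylEvent X (t+1) (Fin.snoc g y) else ∅))
        _ ≤ ∑' g : Fin (t+1) → ℕ,
              q * μ (if ∀ s, g s ≠ xstar then cylEvent X t g else ∅) :=
            ENNReal.tsum_le_tsum hinner
        _ = q * ∑' g : Fin (t+1) → ℕ,
              μ (if ∀ s, g s ≠ xstar then cylEvent X t g else ∅) := ENNReal.tsum_mul_left
        _ ≤ q * q ^ t := mul_le_mul_right ih q
        _ = q ^ (t+1) := by rw [pow_succ, mul_comm]
  -- avoiding xstar up to time t has geometrically small probability
  have hA : ∀ t : ℕ, μ {ω | ∀ s ≤ t, X s ω ≠ xstar} ≤ q ^ t := by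
    intro t
    refine le_trans ?_ (hM t)
    have hsub : {ω | ∀ s ≤ t, X s ω ≠ xstar} ⊆
        ⋃ g : Fin (t+1) → ℕ, (if ∀ s, g s ≠ xstar then cylEvent X t g else ∅) := by
      intro ω hω
      refine Set.mem_iUnion.mpr ⟨fun s => X s ω, ?_⟩
      rw [if_pos]
      · intro s
        rfl
      · intro s
        exact hω s.1 (Nat.lt_succ_iff.mp s.2)
    exact le_trans (measure_mono hsub) (measure_iUnion_le _)
  -- pointwise: hitting time is at most the sum of indicators of measurable hulls
  have hpt : ∀ ω, (⨅ (t : ℕ) (_ : X t ω = xstar), (t : ENNReal))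
      ≤ ∑' t : ℕ, (toMeasurable μ {ω | ∀ s ≤ t, X s ω ≠ xstar}).indicator (fun _ => (1:ENNReal)) ω := by
    intro ω
    by_cases hhit : ∃ t, X t ω = xstar
    · set t₀ := Nat.find hhit with ht₀
      have h1 : (⨅ (t : ℕ) (_ : X t ω = xstar), (t : ENNReal)) ≤ (t₀ : ENNReal) := by
        refine iInf_le_of_le t₀ ?_
        exact iInf_le_of_le (Nat.find_spec hhit) (le_refl _)
      refine le_trans h1 ?_
      have h2 : ∀ t ∈ Finset.range t₀, ((toMeasurable μ {ω | ∀ s ≤ t, X s ω ≠ xstar}).indicator (fun _ => (1:ENNReal)) ω) = 1 := by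
        intro t ht
        rw [Set.indicator_of_mem]
        apply subset_toMeasurable μ _
        intro s hs
        exact Nat.find_min hhit (lt_of_le_of_lt hs (Finset.mem_range.mp ht))
      calc (t₀ : ENNReal)
          = ∑ t ∈ Finset.range t₀, (toMeasurable μ {ω | ∀ s ≤ t, X s ω ≠ xstar}).indicator (fun _ => (1:ENNReal)) ω := by
            rw [Finset.sum_congr rfl h2]
            simp
        _ ≤ ∑' t : ℕ, (toMeasurable μ {ω | ∀ s ≤ t, X s ω ≠ xstar}).indicator (fun _ => (1:ENNReal)) ω := ENNReal.sum_le_tsum _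
    · push_neg at hhit
      have hone : ∀ t : ℕ, ((toMeasurable μ {ω | ∀ s ≤ t, X s ω ≠ xstar}).indicator (fun _ => (1:ENNReal)) ω) = 1 := by
        intro t
        rw [Set.indicator_of_mem]
        apply subset_toMeasurable μ _
        intro s _
        exact hhit s
      rw [tsum_congr hone, ENNReal.tsum_const_eq_top_of_ne_zero one_ne_zero]
      exact le_top
  calc ∫⁻ ω, (⨅ (t : ℕ) (_ : X t ω = xstar), (t : ENNReal)) ∂μ
      ≤ ∫⁻ ω, ∑' t : ℕ, (toMeasurable μ {ω | ∀ s ≤ t, X s ω ≠ xstar}).indicator (fun _ => (1:ENNReal)) ω ∂μ := lintegral_mono hpt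
    _ = ∑' t : ℕ, ∫⁻ ω, (toMeasurable μ {ω | ∀ s ≤ t, X s ω ≠ xstar}).indicator (fun _ => (1:ENNReal)) ω ∂μ :=
        lintegral_tsum (fun t =>
          ((measurable_const.indicator (measurableSet_toMeasurable μ _))).aemeasurable)
    _ = ∑' t : ℕ, μ (toMeasurable μ {ω | ∀ s ≤ t, X s ω ≠ xstar}) := by
        refine tsum_congr (fun t => ?_)
        rw [lintegral_indicator_const (measurableSet_toMeasurable μ _) 1, one_mul]
    _ = ∑' t : ℕ, μ {ω | ∀ s ≤ t, X s ω ≠ xstar} :=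
        tsum_congr (fun t => measure_toMeasurable _)
    _ ≤ ∑' t : ℕ, q ^ t := ENNReal.tsum_le_tsum hA
    _ = (1 - q)⁻¹ := ENNReal.tsum_geometric q

/-- Corollary (b) to Theorem 4.  Let `f : {1, …, φ} → ℝ` (with
`φ ≥ 2`) be any injective function with minimizer `xstar`.  For any Markov chain
`(X_t)` with the ParamHS transition probabilities started at
`X_0 = x₀ ∈ {1, …, φ}`, the expected hitting time of `xstar` is at most
`4·H_{φ−1}·log₂ φ + 4φ·H_{φ−1} = O(φ log φ)`. -/
theorem paramHS_hitting_time_general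
    {Ω : Type*} [MeasurableSpace Ω] (μ : Measure Ω) [IsProbabilityMeasure μ]
    (φ : ℕ) (hφ : 2 ≤ φ) (f : ℕ → ℝ) (hf : Set.InjOn f (Set.Icc 1 φ))
    (xstar : ℕ) (hxs : xstar ∈ Finset.Icc 1 φ)
    (hmin : ∀ y ∈ Finset.Icc 1 φ, y ≠ xstar → f xstar < f y)
    (x₀ : ℕ) (hx₀ : x₀ ∈ Finset.Icc 1 φ)
    (X : ℕ → Ω → ℕ)
    (hstart : ∀ᵐ ω ∂μ, X 0 ω = x₀)
    (hmarkov : ∀ (t : ℕ) (h : ℕ → ℕ) (y : ℕ),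
      μ {ω | (∀ s ≤ t, X s ω = h s) ∧ X (t + 1) ω = y}
        = ENNReal.ofReal (paramHSTransProb φ f (h t) y)
            * μ {ω | ∀ s ≤ t, X s ω = h s}) :
    ∫⁻ ω, (⨅ (t : ℕ) (_ : X t ω = xstar), (t : ENNReal)) ∂μ
      ≤ ENNReal.ofReal (4 * harmonicNumberPred φ * Real.logb 2 (φ : ℝ)
          + 4 * (φ : ℝ) * harmonicNumberPred φ) := by
  have hH1 : 1 ≤ harmonicNumberPred φ := harmonic_ge_one φ hφ
  have hφR : (2:ℝ) ≤ (φ:ℝ) := by exact_mod_cast hφ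
  have hden : (1:ℝ) ≤ ((φ:ℝ) - 1) * harmonicNumberPred φ := by nlinarith
  have hp₀pos : 0 < 1 / (((φ:ℝ) - 1) * harmonicNumberPred φ) := by positivity
  have hp₀le : 1 / (((φ:ℝ) - 1) * harmonicNumberPred φ) ≤ 1 := by
    rw [div_le_one (by linarith)]
    linarith
  have key := hitting_aux μ (↑(Finset.Icc 1 φ) : Set ℕ) (paramHSTransProb φ f)
    (1 - 1 / (((φ:ℝ) - 1) * harmonicNumberPred φ)) xstar x₀ (Finset.mem_coe.mpr hx₀)
    (fun x hxG y hyG => transProb_zero φ f x y (Finset.mem_coe.mp hxG)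
      (fun hc => hyG (Finset.mem_coe.mpr hc)))
    (fun x hxG hxne => transProb_escape φ f x xstar hφ (Finset.mem_coe.mp hxG) hxs hxne hmin)
    X hstart hmarkov
  refine le_trans key ?_
  have hsub : (1 : ENNReal) - ENNReal.ofReal (1 - 1 / (((φ:ℝ) - 1) * harmonicNumberPred φ))
      = ENNReal.ofReal (1 / (((φ:ℝ) - 1) * harmonicNumberPred φ)) := by
    rw [← ENNReal.ofReal_one,
      ← ENNReal.ofReal_sub _ (by linarith : (0:ℝ) ≤ 1 - 1 / (((φ:ℝ) - 1) * harmonicNumberPred φ))]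
    norm_num
  rw [hsub, ← ENNReal.ofReal_inv_of_pos hp₀pos]
  apply ENNReal.ofReal_le_ofReal
  rw [one_div, inv_inv]
  have hlog : 0 ≤ Real.logb 2 (φ:ℝ) := Real.logb_nonneg (by norm_num) (by linarith)
  nlinarith [mul_nonneg (by linarith : (0:ℝ) ≤ 4 * harmonicNumberPred φ) hlog]
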